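/- Coverage of the dissipative cone: let g ∈ ℝⁿ with g ≠ 0. Then for every vector r with ⟨g, r⟩ ≤ 0 there exist a skew-symmetric matrix S and a positive semidefinite matrix K such that r = (S - K) g. -/

import Mathlib

open Matrix RealInnerProductSpace

lemma vecMulVec_mulVec' {n : ℕ} (w v u : Fin n → ℝ) :
    Matrix.vecMulVec w v *ᵥ u = (v ⬝ᵥ u) • w := by
  ext i
  simp [Matrix.mulVec, Matrix.vecMulVec_apply, dotProduct, Finset.mul_sum, mul_comm,
    mul_left_comm, smul_eq_mul]

lemma vecMulVec_transpose {n : ℕ} (w v : Fin n → ℝ) :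
    (Matrix.vecMulVec w v)ᵀ = Matrix.vecMulVec v w := by
  ext i j
  simp [Matrix.vecMulVec_apply, mul_comm]

theorem coverage_of_dissipative_cone (n : ℕ) (g r : Fin n → ℝ)
    (hg : g ≠ 0) (hr : g ⬝ᵥ r ≤ 0) :
    ∃ S K : Matrix (Fin n) (Fin n) ℝ,
      Sᵀ = -S ∧ Kᵀ = K ∧ (∀ v : Fin n → ℝ, 0 ≤ v ⬝ᵥ (K *ᵥ v)) ∧
      (S - K) *ᵥ g = r := by
  set a : ℝ := g ⬝ᵥ g with ha
  have ha0 : 0 < a := by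
    have := dotProduct_self_eq_zero (v := g)
    have h1 : 0 ≤ a := Finset.sum_nonneg fun i _ => mul_self_nonneg _
    rcases h1.lt_or_eq with h | h
    · exact h
    · exact absurd (this.mp h.symm) hg
  set c : ℝ := g ⬝ᵥ r with hc
  set rp : Fin n → ℝ := r - (c / a) • g with hrp
  have hrpg : g ⬝ᵥ rp = 0 := by
    simp [hrp, dotProduct_sub, dotProduct_smul, smul_eq_mul, ← ha, ← hc,
      div_mul_eq_mul_div, mul_comm]
    field_simp
    ring
  refine ⟨(1 / a) • (Matrix.vecMulVec rp g - Matrix.vecMulVec g rp),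
    (-c / a ^ 2) • Matrix.vecMulVec g g, ?_, ?_, ?_, ?_⟩
  · rw [Matrix.transpose_smul, Matrix.transpose_sub, vecMulVec_transpose, vecMulVec_transpose]
    rw [← neg_smul, neg_smul, ← smul_neg, neg_sub]
  · rw [Matrix.transpose_smul, vecMulVec_transpose]
  · intro v
    rw [Matrix.smul_mulVec, dotProduct_smul, vecMulVec_mulVec',
      dotProduct_smul]
    have : (0:ℝ) ≤ -c / a ^ 2 := div_nonneg (by linarith) (by positivity)
    have h2 : v ⬝ᵥ g = g ⬝ᵥ v := dotProduct_comm v g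
    simp only [smul_eq_mul, h2]
    exact mul_nonneg this (mul_self_nonneg _)
  · rw [Matrix.sub_mulVec, Matrix.smul_mulVec, Matrix.smul_mulVec,
      Matrix.sub_mulVec, vecMulVec_mulVec', vecMulVec_mulVec', vecMulVec_mulVec']
    have hrpg' : rp ⬝ᵥ g = 0 := by rw [dotProduct_comm]; exact hrpg
    rw [hrpg', ← ha]
    ext i
    simp only [Pi.smul_apply, Pi.sub_apply, smul_eq_mul, hrp, Pi.smul_apply, Pi.sub_apply]
    field_simp
    ring
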